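/- Let d ≥ 1, α ∈ ℝᵈ with αᵢ ≥ 0 for all i, θ ∈ ℝ, δ ∈ ℝ, and define f : ℝᵈ → ℝ by f(x) = Σᵢ αᵢ(1 − cos(θxᵢ)) + δ‖x‖². Then f is twice continuously differentiable, its Hessian H(x) is the diagonal map with entries H(x)ᵢᵢ = αᵢθ²·cos(θxᵢ) + 2δ, and the Hessian is Lipschitz in operator norm on ℝᵈ with constant ‖α‖₂·|θ|³: for all x, y ∈ ℝᵈ, ‖H(x) − H(y)‖_op ≤ ‖α‖₂|θ|³·‖x − y‖. (The Hessian-Lipschitz constant L₃ for the generalized Rastrigin function.) -/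

import Mathlib

open Real Finset

namespace RastriginAux

noncomputable def g (a θ δ t : ℝ) : ℝ := a * (1 - Real.cos (θ * t)) + δ * t ^ 2
noncomputable def g1 (a θ δ t : ℝ) : ℝ := a * θ * Real.sin (θ * t) + 2 * δ * t
noncomputable def g2 (a θ δ t : ℝ) : ℝ := a * θ ^ 2 * Real.cos (θ * t) + 2 * δ

lemma hasDerivAt_g (a θ δ t : ℝ) : HasDerivAt (g a θ δ) (g1 a θ δ t) t := by
  have h1 : HasDerivAt (fun t : ℝ => θ * t) θ t := by
    simpa using (hasDerivAt_id t).const_mul θ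
  have h2 : HasDerivAt (fun t : ℝ => a * (1 - Real.cos (θ * t)))
      (a * (Real.sin (θ * t) * θ)) t := by
    simpa using (((hasDerivAt_const t (1:ℝ)).sub h1.cos).const_mul a)
  have h3 : HasDerivAt (fun t : ℝ => δ * t ^ 2) (δ * (2 * t)) t := by
    simpa using ((hasDerivAt_pow 2 t).const_mul δ)
  have := h2.add h3
  refine this.congr_deriv ?_
  unfold g1; ring

lemma hasDerivAt_g1 (a θ δ t : ℝ) : HasDerivAt (g1 a θ δ) (g2 a θ δ t) t := by
  have h1 : HasDerivAt (fun t : ℝ => θ * t) θ t := by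
    simpa using (hasDerivAt_id t).const_mul θ
  have h2 : HasDerivAt (fun t : ℝ => a * θ * Real.sin (θ * t))
      (a * θ * (Real.cos (θ * t) * θ)) t := by
    simpa using (h1.sin.const_mul (a * θ))
  have h3 : HasDerivAt (fun t : ℝ => 2 * δ * t) (2 * δ) t := by
    simpa using (hasDerivAt_id t).const_mul (2 * δ)
  have := h2.add h3
  refine this.congr_deriv ?_
  unfold g2; ring

lemma contDiff_g (a θ δ : ℝ) : ContDiff ℝ 2 (g a θ δ) := by
  unfold g
  apply ContDiff.add
  · exact contDiff_const.mul (contDiff_const.sub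
      (Real.contDiff_cos.comp (contDiff_const.mul contDiff_id)))
  · exact contDiff_const.mul (contDiff_id.pow 2)


variable {n : ℕ}

noncomputable def D1 (α : EuclideanSpace ℝ (Fin n)) (θ δ : ℝ)
    (x : EuclideanSpace ℝ (Fin n)) : EuclideanSpace ℝ (Fin n) →L[ℝ] ℝ :=
  ∑ i, g1 (α i) θ δ (x i) • EuclideanSpace.proj i

noncomputable def D2 (α : EuclideanSpace ℝ (Fin n)) (θ δ : ℝ)
    (x : EuclideanSpace ℝ (Fin n)) :
    EuclideanSpace ℝ (Fin n) →L[ℝ] EuclideanSpace ℝ (Fin n) →L[ℝ] ℝ :=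
  ∑ i, g2 (α i) θ δ (x i) •
    ((EuclideanSpace.proj i : EuclideanSpace ℝ (Fin n) →L[ℝ] ℝ).smulRight
      (EuclideanSpace.proj i))

lemma hasFDerivAt_sum_g (α : EuclideanSpace ℝ (Fin n)) (θ δ : ℝ)
    (x : EuclideanSpace ℝ (Fin n)) :
    HasFDerivAt (fun x : EuclideanSpace ℝ (Fin n) => ∑ i, g (α i) θ δ (x i))
      (D1 α θ δ x) x := by
  apply HasFDerivAt.fun_sum
  intro i _
  have hp : HasFDerivAt (fun y : EuclideanSpace ℝ (Fin n) => y i)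
      (EuclideanSpace.proj i : EuclideanSpace ℝ (Fin n) →L[ℝ] ℝ) x :=
    (EuclideanSpace.proj (𝕜 := ℝ) i).hasFDerivAt
  exact (hasDerivAt_g (α i) θ δ (x i)).comp_hasFDerivAt x hp

lemma hasFDerivAt_D1 (α : EuclideanSpace ℝ (Fin n)) (θ δ : ℝ)
    (x : EuclideanSpace ℝ (Fin n)) :
    HasFDerivAt (D1 α θ δ) (D2 α θ δ x) x := by
  unfold D1 D2
  apply HasFDerivAt.fun_sum
  intro i _
  have h : HasFDerivAt (fun x : EuclideanSpace ℝ (Fin n) => g1 (α i) θ δ (x i))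
      (g2 (α i) θ δ (x i) • (EuclideanSpace.proj i : EuclideanSpace ℝ (Fin n) →L[ℝ] ℝ)) x :=
    by
    have hp : HasFDerivAt (fun y : EuclideanSpace ℝ (Fin n) => y i)
          (EuclideanSpace.proj i : EuclideanSpace ℝ (Fin n) →L[ℝ] ℝ) x :=
        (EuclideanSpace.proj (𝕜 := ℝ) i).hasFDerivAt
    exact (hasDerivAt_g1 (α i) θ δ (x i)).comp_hasFDerivAt x hp
  have := h.smul_const (EuclideanSpace.proj i : EuclideanSpace ℝ (Fin n) →L[ℝ] ℝ)
  convert this using 1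
  ext v w
  simp only [ContinuousLinearMap.smulRight_apply, ContinuousLinearMap.smul_apply,
    PiLp.proj_apply, smul_eq_mul]
  ring


lemma abs_coord_le (v : EuclideanSpace ℝ (Fin n)) (i : Fin n) : |v i| ≤ ‖v‖ := by
  rw [EuclideanSpace.norm_eq]
  have h1 : |v i| = Real.sqrt (‖v i‖ ^ 2) := by
    rw [Real.norm_eq_abs, Real.sqrt_sq (abs_nonneg _)]
  rw [h1]
  apply Real.sqrt_le_sqrt
  exact Finset.single_le_sum (fun j _ => sq_nonneg ‖v j‖) (Finset.mem_univ i)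

lemma cauchy_schwarz_abs (v w : EuclideanSpace ℝ (Fin n)) :
    ∑ i, |v i| * |w i| ≤ ‖v‖ * ‖w‖ := by
  set v' : EuclideanSpace ℝ (Fin n) := WithLp.toLp 2 (fun i => |v i|) with hv'
  set w' : EuclideanSpace ℝ (Fin n) := WithLp.toLp 2 (fun i => |w i|) with hw'
  have h1 : ∑ i, |v i| * |w i| = (inner ℝ v' w' : ℝ) := by
    simp [PiLp.inner_apply, hv', hw', RCLike.inner_apply, conj_trivial, mul_comm]
  have h2 : ‖v'‖ = ‖v‖ := by
    rw [EuclideanSpace.norm_eq, EuclideanSpace.norm_eq]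
    congr 1
    apply Finset.sum_congr rfl
    intro i _
    simp [hv', Real.norm_eq_abs, abs_abs]
  have h3 : ‖w'‖ = ‖w‖ := by
    rw [EuclideanSpace.norm_eq, EuclideanSpace.norm_eq]
    congr 1
    apply Finset.sum_congr rfl
    intro i _
    simp [hw', Real.norm_eq_abs, abs_abs]
  rw [h1, ← h2, ← h3]
  exact real_inner_le_norm v' w'


lemma abs_cos_sub_cos_le (a b : ℝ) : |Real.cos a - Real.cos b| ≤ |a - b| := by
  rw [Real.cos_sub_cos, abs_mul, abs_mul]
  have h1 : |(-2 : ℝ)| = 2 := by norm_num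
  have h2 : |Real.sin ((a + b) / 2)| ≤ 1 := Real.abs_sin_le_one _
  have h3 : |Real.sin ((a - b) / 2)| ≤ |(a - b) / 2| := Real.abs_sin_le_abs
  calc |(-2 : ℝ)| * |Real.sin ((a + b) / 2)| * |Real.sin ((a - b) / 2)|
      ≤ 2 * 1 * |(a - b) / 2| := by
        rw [h1]
        apply mul_le_mul (mul_le_mul_of_nonneg_left h2 (by norm_num)) h3
          (abs_nonneg _) (by norm_num)
    _ = |a - b| := by rw [abs_div, abs_two]; ring

end RastriginAux


/-- The Hessian-Lipschitz constant `L₃ = ‖α‖₂|θ|³` for the generalized Rastrigin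
function `f(x) = Σᵢ αᵢ(1 - cos(θxᵢ)) + δ‖x‖²`: `f` is `C²`, its Hessian is the
diagonal bilinear form with entries `αᵢθ²cos(θxᵢ) + 2δ`, and the Hessian is
Lipschitz in operator norm with constant `‖α‖₂|θ|³`. -/
theorem rastrigin_hessian_lipschitz
    {n : ℕ} (hn : 1 ≤ n)
    (α : EuclideanSpace ℝ (Fin n)) (hα : ∀ i, 0 ≤ α i) (θ δ : ℝ)
    (f : EuclideanSpace ℝ (Fin n) → ℝ)
    (hf : ∀ x : EuclideanSpace ℝ (Fin n),
      f x = ∑ i, α i * (1 - Real.cos (θ * x i)) + δ * ‖x‖ ^ 2) :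
    ContDiff ℝ 2 f ∧
    (∀ x v w : EuclideanSpace ℝ (Fin n),
      fderiv ℝ (fderiv ℝ f) x v w
        = ∑ i, (α i * θ ^ 2 * Real.cos (θ * x i) + 2 * δ) * v i * w i) ∧
    (∀ x y : EuclideanSpace ℝ (Fin n),
      ‖fderiv ℝ (fderiv ℝ f) x - fderiv ℝ (fderiv ℝ f) y‖
        ≤ ‖α‖ * |θ| ^ 3 * ‖x - y‖) := by
  classical
  open RastriginAux in
  -- rewrite f as a sum of coordinatewise functions
  have hnorm : ∀ x : EuclideanSpace ℝ (Fin n), (‖x‖ : ℝ) ^ 2 = ∑ i, x i ^ 2 := by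
    intro x
    rw [EuclideanSpace.norm_eq, Real.sq_sqrt (by positivity)]
    simp [Real.norm_eq_abs, sq_abs]
  have hfe : f = fun x => ∑ i, RastriginAux.g (α i) θ δ (x i) := by
    funext x
    rw [hf x, hnorm x, Finset.mul_sum, ← Finset.sum_add_distrib]
    rfl
  have hD1 : fderiv ℝ f = RastriginAux.D1 α θ δ := by
    funext x
    rw [hfe]
    exact (RastriginAux.hasFDerivAt_sum_g α θ δ x).fderiv
  have hD2 : ∀ x, fderiv ℝ (fderiv ℝ f) x = RastriginAux.D2 α θ δ x := by
    intro x
    rw [hD1]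
    exact (RastriginAux.hasFDerivAt_D1 α θ δ x).fderiv
  have hD2app : ∀ x v w : EuclideanSpace ℝ (Fin n),
      RastriginAux.D2 α θ δ x v w = ∑ i, RastriginAux.g2 (α i) θ δ (x i) * v i * w i := by
    intro x v w
    unfold RastriginAux.D2
    simp only [ContinuousLinearMap.sum_apply, ContinuousLinearMap.smul_apply,
      ContinuousLinearMap.smulRight_apply, PiLp.proj_apply, smul_eq_mul,
      Finset.sum_apply]
    apply Finset.sum_congr rfl
    intro i _
    ring
  refine ⟨?_, ?_, ?_⟩
  · -- C²
    rw [hfe]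
    apply ContDiff.sum
    intro i _
    have hc : ContDiff ℝ 2 (fun x : EuclideanSpace ℝ (Fin n) => x i) :=
      (EuclideanSpace.proj (𝕜 := ℝ) i).contDiff
    exact (RastriginAux.contDiff_g (α i) θ δ).comp hc
  · -- Hessian formula
    intro x v w
    rw [hD2 x, hD2app]
    rfl
  · -- Lipschitz bound
    intro x y
    rw [hD2 x, hD2 y]
    set K : ℝ := ‖α‖ * |θ| ^ 3 * ‖x - y‖ with hK
    have hK0 : 0 ≤ K := by positivity
    -- pointwise bound on the diagonal entries
    have hcoord : ∀ i : Fin n,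
        |RastriginAux.g2 (α i) θ δ (x i) - RastriginAux.g2 (α i) θ δ (y i)| ≤ K := by
      intro i
      have hxy : (x - y) i = x i - y i := rfl
      have h1 : |x i - y i| ≤ ‖x - y‖ := by
        rw [← hxy]; exact RastriginAux.abs_coord_le (x - y) i
      have h2 : α i ≤ ‖α‖ := le_trans (le_abs_self _) (RastriginAux.abs_coord_le α i)
      have hcos : |Real.cos (θ * x i) - Real.cos (θ * y i)| ≤ |θ| * |x i - y i| := by
        calc |Real.cos (θ * x i) - Real.cos (θ * y i)| ≤ |θ * x i - θ * y i| :=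
              RastriginAux.abs_cos_sub_cos_le _ _
          _ = |θ| * |x i - y i| := by rw [← mul_sub, abs_mul]
      have : RastriginAux.g2 (α i) θ δ (x i) - RastriginAux.g2 (α i) θ δ (y i)
          = α i * θ ^ 2 * (Real.cos (θ * x i) - Real.cos (θ * y i)) := by
        unfold RastriginAux.g2; ring
      rw [this, abs_mul, abs_mul]
      rw [abs_of_nonneg (hα i), abs_of_nonneg (sq_nonneg θ)]
      calc α i * θ ^ 2 * |Real.cos (θ * x i) - Real.cos (θ * y i)|
          ≤ ‖α‖ * θ ^ 2 * (|θ| * ‖x - y‖) := by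
            apply mul_le_mul
            · exact mul_le_mul_of_nonneg_right h2 (sq_nonneg θ)
            · exact le_trans hcos (mul_le_mul_of_nonneg_left h1 (abs_nonneg θ))
            · exact abs_nonneg _
            · positivity
        _ = K := by rw [hK, ← sq_abs θ]; ring
    apply ContinuousLinearMap.opNorm_le_bound _ hK0
    intro v
    rw [mul_comm K ‖v‖]
    apply ContinuousLinearMap.opNorm_le_bound _ (by positivity)
    intro w
    have happ : ((RastriginAux.D2 α θ δ x - RastriginAux.D2 α θ δ y) v) w
        = ∑ i, (RastriginAux.g2 (α i) θ δ (x i) - RastriginAux.g2 (α i) θ δ (y i))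
            * v i * w i := by
      simp only [ContinuousLinearMap.sub_apply, hD2app, ← Finset.sum_sub_distrib]
      apply Finset.sum_congr rfl
      intro i _
      ring
    rw [happ, Real.norm_eq_abs]
    calc |∑ i, (RastriginAux.g2 (α i) θ δ (x i) - RastriginAux.g2 (α i) θ δ (y i))
            * v i * w i|
        ≤ ∑ i, |(RastriginAux.g2 (α i) θ δ (x i) - RastriginAux.g2 (α i) θ δ (y i))
            * v i * w i| := Finset.abs_sum_le_sum_abs _ _
      _ ≤ ∑ i, K * (|v i| * |w i|) := by
          apply Finset.sum_le_sum
          intro i _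
          rw [abs_mul, abs_mul, mul_assoc]
          exact mul_le_mul_of_nonneg_right (hcoord i) (by positivity)
      _ = K * ∑ i, |v i| * |w i| := by rw [Finset.mul_sum]
      _ ≤ K * (‖v‖ * ‖w‖) := mul_le_mul_of_nonneg_left
            (RastriginAux.cauchy_schwarz_abs v w) hK0
      _ = ‖v‖ * K * ‖w‖ := by ring
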